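/- Let f : ℝⁿ → ℝ be differentiable, g : ℝⁿ → ℝ convex, α > 0, and let x : [0,∞) → ℝⁿ be a differentiable solution of the proximal gradient dynamics ẋ(t) = -x(t) + prox_{αg}(x(t) - α∇f(x(t))). Then the function t ↦ f(x(t)) + g(x(t)) is nonincreasing. -/

import Mathlib

open Filter Set Metric Topology

/-- Key pointwise inequality from the prox characterization. -/
lemma prox_key_ineq {n : ℕ}
    (f g : EuclideanSpace ℝ (Fin n) → ℝ)
    (f' prox : EuclideanSpace ℝ (Fin n) → EuclideanSpace ℝ (Fin n))
    (α : ℝ) (hα : 0 < α)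
    (hprox : ∀ y u, α * g (prox y) + ‖prox y - (y - α • f' y)‖ ^ 2 / 2 ≤
                    α * g u + ‖u - (y - α • f' y)‖ ^ 2 / 2)
    (y : EuclideanSpace ℝ (Fin n)) :
    inner ℝ (f' y) (prox y - y) + g (prox y) - g y ≤ (0 : ℝ) := by
  have h := hprox y y
  have e1 : prox y - (y - α • f' y) = (prox y - y) + α • f' y := by abel
  have e2 : y - (y - α • f' y) = α • f' y := by abel
  rw [e1, e2, norm_add_sq_real] at h
  have e3 : (inner ℝ (prox y - y) (α • f' y) : ℝ) = α * inner ℝ (prox y - y) (f' y) :=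
    real_inner_smul_right _ _ _
  rw [e3] at h
  have e4 : (inner ℝ (f' y) (prox y - y) : ℝ) = inner ℝ (prox y - y) (f' y) :=
    real_inner_comm _ _
  rw [e4]
  nlinarith [sq_nonneg ‖prox y - y‖, hα]

set_option maxHeartbeats 1600000

/-- Theorem 3(i): the cost `F = f + g` is nonincreasing along differentiable
solutions of the proximal gradient dynamics `ẋ = -x + prox_{αg}(x - α∇f(x))`. -/
theorem cost_nonincreasing_along_prox_grad {n : ℕ}
    (f g : EuclideanSpace ℝ (Fin n) → ℝ)
    (f' prox : EuclideanSpace ℝ (Fin n) → EuclideanSpace ℝ (Fin n))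
    (hf : ∀ y, HasGradientAt f (f' y) y)
    (hg : ConvexOn ℝ Set.univ g) (α : ℝ) (hα : 0 < α)
    (hprox : ∀ y u, α * g (prox y) + ‖prox y - (y - α • f' y)‖ ^ 2 / 2 ≤
                    α * g u + ‖u - (y - α • f' y)‖ ^ 2 / 2)
    (x : ℝ → EuclideanSpace ℝ (Fin n))
    (hx : ∀ t, 0 ≤ t → HasDerivAt x (-x t + prox (x t)) t) :
    ∀ t₁ t₂, 0 ≤ t₁ → t₁ ≤ t₂ →
      f (x t₂) + g (x t₂) ≤ f (x t₁) + g (x t₁) := by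
  intro t₁ t₂ ht₁ ht
  set φ : ℝ → ℝ := fun t => f (x t) + g (x t) with hφ
  have hgcont : Continuous g := hg.locallyLipschitz.continuous
  have hφcont : ContinuousOn φ (Icc t₁ t₂) := by
    intro t htm
    have hxc : ContinuousAt x t := (hx t (le_trans ht₁ htm.1)).continuousAt
    exact (((hf (x t)).differentiableAt.continuousAt.comp hxc).add
      (hgcont.continuousAt.comp hxc)).continuousWithinAt
  have main : ∀ ⦃z⦄, z ∈ Icc t₁ t₂ → φ z ≤ (fun _ : ℝ => φ t₁) z := by
    apply image_le_of_liminf_slope_right_le_deriv_boundary (B := fun _ => φ t₁) hφcont le_rfl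
      continuousOn_const (fun z _ => hasDerivWithinAt_const _ _ _)
    intro t htm r hr
    -- show frequently (in fact eventually) the slope is < r
    have ht0 : 0 ≤ t := le_trans ht₁ htm.1
    set y := x t with hy
    set p := prox y with hp
    set v : EuclideanSpace ℝ (Fin n) := -y + p with hv
    have hxd : HasDerivAt x v t := hx t ht0
    -- derivative of f ∘ x
    have hd : HasDerivAt (fun z => f (x z)) (inner ℝ (f' y) v) t := by
      have := (hf y).hasFDerivAt.comp_hasDerivAt t hxd
      exact this
    set d : ℝ := inner ℝ (f' y) v with hd'
    -- local Lipschitz data for g near y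
    obtain ⟨K, s, hs, hK⟩ := hg.locallyLipschitz y
    set c : ℝ := r / (3 * ((K : ℝ) + 1)) with hc
    have hKpos : (0 : ℝ) < (K : ℝ) + 1 := by positivity
    have hcpos : 0 < c := by positivity
    -- eventual facts
    have E1 : ∀ᶠ z in 𝓝[>] t, slope (fun z => f (x z)) t z < d + r / 3 := by
      have htend : Tendsto (slope (fun z => f (x z)) t) (𝓝[>] t) (𝓝 d) :=
        (hasDerivAt_iff_tendsto_slope.1 hd).mono_left
          (nhdsWithin_mono _ (fun z hz => ne_of_gt hz))
      exact htend.eventually_lt_const (by linarith)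
    have E2 : ∀ᶠ z in 𝓝[>] t, z ∈ Ioo t (t + 1) :=
      Ioo_mem_nhdsGT_of_mem ⟨le_rfl, by linarith⟩
    have E3 : ∀ᶠ z in 𝓝[>] t, x z ∈ s :=
      (hxd.continuousAt.tendsto.eventually_mem hs).filter_mono nhdsWithin_le_nhds
    have E4 : ∀ᶠ z in 𝓝[>] t, y + (z - t) • v ∈ s := by
      have hcont : Tendsto (fun z : ℝ => y + (z - t) • v) (𝓝 t) (𝓝 y) := by
        have : Continuous (fun z : ℝ => y + (z - t) • v) := by continuity
        have h0 : y + ((t : ℝ) - t) • v = y := by simp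
        simpa [h0] using this.tendsto t
      exact (hcont.eventually_mem hs).filter_mono nhdsWithin_le_nhds
    have E5 : ∀ᶠ z in 𝓝[>] t, ‖x z - x t - (z - t) • v‖ ≤ c * ‖z - t‖ := by
      have := (hasDerivAt_iff_isLittleO.1 hxd).bound hcpos
      exact this.filter_mono nhdsWithin_le_nhds
    refine ((E1.and (E2.and (E3.and (E4.and E5)))).mono ?_).frequently
    rintro z ⟨hz1, ⟨hzl, hzu⟩, hz3, hz4, hz5⟩
    set h := z - t with hh
    have hhpos : 0 < h := sub_pos.2 hzl
    have hhle : h ≤ 1 := by simp only [hh]; linarith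
    -- f part
    have hfpart : f (x z) - f y < (d + r / 3) * h := by
      rw [slope_def_field, div_lt_iff₀ hhpos] at hz1
      simpa [hy] using hz1
    -- g part
    have hgsplit : y + h • v = (1 - h) • y + h • p := by
      simp only [hv, smul_add, smul_neg, smul_sub, sub_smul, one_smul]
      abel
    have hgconv : g (y + h • v) ≤ (1 - h) * g y + h * g p := by
      rw [hgsplit]
      exact hg.2 (mem_univ y) (mem_univ p) (by linarith) hhpos.le (by ring)
    have hglip : g (x z) - g (y + h • v) ≤ (K : ℝ) * (c * h) := by
      have hdist : dist (x z) (y + h • v) ≤ c * h := by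
        rw [dist_eq_norm]
        have he : x z - (y + h • v) = x z - x t - h • v := by rw [hy]; abel
        rw [he]
        calc ‖x z - x t - h • v‖ ≤ c * ‖h‖ := hz5
          _ = c * h := by rw [Real.norm_eq_abs, abs_of_pos hhpos]
      have hd2 := hK.dist_le_mul (x z) hz3 (y + h • v) hz4
      rw [Real.dist_eq] at hd2
      have habs : |g (x z) - g (y + h • v)| ≤ (K : ℝ) * (c * h) :=
        le_trans hd2 (by nlinarith [K.coe_nonneg, dist_nonneg.trans hdist, hdist])
      exact (abs_le.1 habs).2
    have hgpart : g (x z) - g y ≤ (K : ℝ) * (c * h) + h * (g p - g y) := by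
      have : g (x z) - g y = (g (x z) - g (y + h • v)) + (g (y + h • v) - g y) := by ring
      rw [this]
      have hre : (1 - h) * g y + h * g p - g y = h * (g p - g y) := by ring
      have h2 : g (y + h • v) - g y ≤ h * (g p - g y) := by linarith [hgconv]
      linarith
    -- key inequality
    have hkey : inner ℝ (f' y) (p - y) + g p - g y ≤ (0 : ℝ) :=
      prox_key_ineq f g f' prox α hα hprox y
    have hvd : d = inner ℝ (f' y) (p - y) := by
      rw [hd', hv, neg_add_eq_sub]
    have hKc : (K : ℝ) * c ≤ r / 3 := by
      have h1 : (K : ℝ) * c = ((K : ℝ) * r) / (3 * ((K : ℝ) + 1)) := by rw [hc]; ring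
      rw [h1, div_le_div_iff₀ (by positivity) (by norm_num : (0:ℝ) < 3)]
      nlinarith [K.coe_nonneg, hr.le]
    -- conclude
    rw [slope_def_field, div_lt_iff₀ hhpos]
    have hφdiff : φ z - φ t = (f (x z) - f y) + (g (x z) - g y) := by
      simp only [hφ, hy]; ring
    have hkey' : h * (d + g p - g y) ≤ 0 := by
      rw [hvd]
      have hk : inner ℝ (f' y) (p - y) + g p - g y ≤ (0:ℝ) := hkey
      nlinarith
    have hmul : ((K : ℝ) * c) * h ≤ (r / 3) * h :=
      mul_le_mul_of_nonneg_right hKc hhpos.le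
    have hrh : 0 < (r / 3) * h := by positivity
    calc φ z - φ t = (f (x z) - f y) + (g (x z) - g y) := hφdiff
      _ < r * h := by
          have e1 : (d + r / 3) * h = d * h + r / 3 * h := by ring
          have e2 : h * (d + g p - g y) = d * h + h * g p - h * g y := by ring
          have e3 : (K : ℝ) * (c * h) = (K : ℝ) * c * h := by ring
          have e4 : h * (g p - g y) = h * g p - h * g y := by ring
          rw [e1] at hfpart
          rw [e3, e4] at hgpart
          rw [e2] at hkey'
          clear_value h c d v p y
          linarith [hfpart, hgpart, hmul, hrh, hkey']
  exact main (right_mem_Icc.2 ht)
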